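/- Let h : ℝ → ℝ be nonnegative, continuous on [−τ, ∞), differentiable on [0, ∞), and satisfy h′(t) = γ(t)·h(t) + α(t)·h(t−τ)^p + β(t) for all t ≥ 0, with h(τ) > 0. Let q > 1 and define ζ(t) := [h(τ)·ν(τ) + ∫_τ^t β(ξ)·ν(ξ) dξ]/ν(t) for t ≥ τ. If α(t)·σ(t)^p·(q·ζ(t))^p ≤ (q−1)·β(t) for all t ≥ τ, then h(t) ≤ q·ζ(t) for all t ≥ τ. -/

import Mathlib

open Real MeasureTheory Set Filter

/-- `ν(t) = exp(−∫₀ᵗ γ(ξ) dξ)`. -/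
noncomputable def nu (γ : ℝ → ℝ) (t : ℝ) : ℝ := Real.exp (-∫ ξ in (0:ℝ)..t, γ ξ)

/-- `σ(t) = exp(−∫_{t−τ}^t γ(ξ) dξ)`. -/
noncomputable def sig (γ : ℝ → ℝ) (τ t : ℝ) : ℝ :=
  Real.exp (-∫ ξ in (t - τ)..t, γ ξ)

/-- Lemma 2.6: if `α σ^p (qζ)^p ≤ (q−1)β` on `[τ,∞)`, where
`ζ(t) = [h(τ)ν(τ) + ∫_τ^t β ν]/ν(t)`, then `h(t) ≤ q ζ(t)` for `t ≥ τ`. -/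
theorem stmt_11
    (τ p : ℝ) (hτ : 0 < τ) (hp : 1 < p)
    (γ α β : ℝ → ℝ)
    (hγc : Continuous γ) (hαc : Continuous α) (hβc : Continuous β)
    (hα : ∀ t, 0 ≤ α t) (hβ : ∀ t, 0 ≤ β t)
    (h h' : ℝ → ℝ)
    (hh0 : ∀ t, -τ ≤ t → 0 ≤ h t)
    (hhc : ContinuousOn h (Ici (-τ)))
    (hhd : ∀ t, 0 ≤ t → HasDerivWithinAt h (h' t) (Ici (0:ℝ)) t)
    (hheq : ∀ t, 0 ≤ t → h' t = γ t * h t + α t * h (t - τ) ^ p + β t)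
    (hhτ : 0 < h τ)
    (q : ℝ) (hq : 1 < q)
    (ζ : ℝ → ℝ)
    (hζ : ∀ t, τ ≤ t →
      ζ t = (h τ * nu γ τ + ∫ ξ in τ..t, β ξ * nu γ ξ) / nu γ t)
    (hcond : ∀ t, τ ≤ t → α t * sig γ τ t ^ p * (q * ζ t) ^ p ≤ (q - 1) * β t) :
    ∀ t, τ ≤ t → h t ≤ q * ζ t := by
  have hνpos : ∀ t, 0 < nu γ t := fun t => Real.exp_pos _
  -- derivative of ν
  have hνd : ∀ t : ℝ, HasDerivAt (nu γ) (-γ t * nu γ t) t := by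
    intro t
    have h1 : HasDerivAt (fun u => ∫ ξ in (0:ℝ)..u, γ ξ) (γ t) t :=
      (hγc.integral_hasStrictDerivAt 0 t).hasDerivAt
    have h2 := (h1.neg).exp
    show HasDerivAt (fun u => Real.exp (-∫ ξ in (0:ℝ)..u, γ ξ)) _ t
    simpa [nu, mul_comm] using h2
  have hνc : Continuous (nu γ) :=
    continuous_iff_continuousAt.2 fun t => (hνd t).continuousAt
  -- σ as ratio of ν's
  have hsig : ∀ t : ℝ, sig γ τ t = nu γ t / nu γ (t - τ) := by
    intro t
    have hsub : (∫ ξ in (0:ℝ)..t, γ ξ) - ∫ ξ in (0:ℝ)..(t - τ), γ ξ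
        = ∫ ξ in (t - τ)..t, γ ξ :=
      intervalIntegral.integral_interval_sub_left
        (hγc.intervalIntegrable _ _) (hγc.intervalIntegrable _ _)
    rw [sig, nu, nu, ← Real.exp_sub, ← hsub]
    ring_nf
  -- u = h·ν is monotone on [0, ∞)
  have hmono : MonotoneOn (fun s => h s * nu γ s) (Ici (0:ℝ)) := by
    apply monotoneOn_of_deriv_nonneg (convex_Ici 0)
    · exact (hhc.mono (Ici_subset_Ici.2 (by linarith))).mul hνc.continuousOn
    · intro x hx
      rw [interior_Ici] at hx
      have hdx : HasDerivAt h (h' x) x :=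
        (hhd x (le_of_lt hx)).hasDerivAt (Ici_mem_nhds hx)
      exact ((hdx.mul (hνd x)).differentiableAt).differentiableWithinAt
    · intro x hx
      rw [interior_Ici] at hx
      have hx0 : 0 < x := hx
      have hdx : HasDerivAt h (h' x) x :=
        (hhd x (le_of_lt hx)).hasDerivAt (Ici_mem_nhds hx)
      have hdu : HasDerivAt (fun s => h s * nu γ s)
          (h' x * nu γ x + h x * (-γ x * nu γ x)) x := hdx.mul (hνd x)
      rw [hdu.deriv, hheq x (le_of_lt hx)]
      have h1 : 0 ≤ α x * h (x - τ) ^ p :=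
        mul_nonneg (hα x) (Real.rpow_nonneg (hh0 _ (by linarith)) p)
      have h2 : 0 ≤ (α x * h (x - τ) ^ p + β x) * nu γ x :=
        mul_nonneg (by linarith [hβ x]) (le_of_lt (hνpos x))
      nlinarith
  -- delay estimate: h(x-τ) ≤ h x · σ x for x ≥ τ
  have hdelay : ∀ x : ℝ, τ ≤ x → h (x - τ) ≤ h x * sig γ τ x := by
    intro x hx
    have hu : h (x - τ) * nu γ (x - τ) ≤ h x * nu γ x :=
      hmono (by simp [sub_nonneg, hx] : x - τ ∈ Ici (0:ℝ))
        (mem_Ici.2 (by linarith)) (by linarith)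
    rw [hsig]
    rw [div_eq_mul_inv, ← mul_assoc, ← div_eq_mul_inv, le_div_iff₀ (hνpos (x - τ))]
    linarith
  -- main argument
  intro t ht
  by_contra hcon
  push_neg at hcon
  set Z : ℝ → ℝ := fun s => h τ * nu γ τ + ∫ ξ in τ..s, β ξ * nu γ ξ with hZ
  have hZd : ∀ s : ℝ, HasDerivAt Z (β s * nu γ s) s := by
    intro s
    have := ((hβc.mul hνc).integral_hasStrictDerivAt τ s).hasDerivAt
    exact (this.const_add (h τ * nu γ τ))
  have hZc : Continuous Z := continuous_iff_continuousAt.2 fun s => (hZd s).continuousAt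
  have hζν : ∀ s, τ ≤ s → ζ s * nu γ s = Z s := by
    intro s hs
    rw [hζ s hs, div_mul_cancel₀ _ (ne_of_gt (hνpos s))]
  set w : ℝ → ℝ := fun s => q * Z s - h s * nu γ s with hw
  -- the "bad" set
  set S : Set ℝ := Icc τ t ∩ w ⁻¹' Iic 0 with hS
  have hwc : ContinuousOn w (Icc τ t) := by
    apply ContinuousOn.sub (hZc.continuousOn.const_smul q) _
    exact ((hhc.mono (fun y hy => le_trans (by linarith) hy.1)).mul hνc.continuousOn)
  have htS : t ∈ S := by
    constructor
    · exact ⟨ht, le_refl t⟩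
    · have : h t * nu γ t > q * ζ t * nu γ t :=
        (mul_lt_mul_iff_left₀ (hνpos t)).2 hcon
      have := hζν t ht
      simp only [mem_preimage, mem_Iic, hw]
      nlinarith
  have hSclosed : IsClosed S :=
    hwc.preimage_isClosed_of_isClosed isClosed_Icc isClosed_Iic
  have hSne : S.Nonempty := ⟨t, htS⟩
  have hSbdd : BddBelow S := ⟨τ, fun x hx => hx.1.1⟩
  set t₀ : ℝ := sInf S with ht₀
  have ht₀S : t₀ ∈ S := hSclosed.csInf_mem hSne hSbdd
  have hτt₀ : τ ≤ t₀ := ht₀S.1.1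
  have hwτ : 0 < w τ := by
    have : Z τ = h τ * nu γ τ := by simp [hZ]
    simp only [hw, this]
    nlinarith [mul_pos (sub_pos.2 hq) (mul_pos hhτ (hνpos τ))]
  have hτlt : τ < t₀ := by
    rcases lt_or_eq_of_le hτt₀ with h1 | h1
    · exact h1
    · exfalso
      have := ht₀S.2
      rw [← h1] at this
      simp only [mem_preimage, mem_Iic] at this
      linarith
  -- on [τ, t₀), w > 0, hence h < qζ
  have hwpos : ∀ x, τ ≤ x → x < t₀ → 0 < w x := by
    intro x hx1 hx2
    by_contra hc
    push_neg at hc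
    have hxS : x ∈ S := ⟨⟨hx1, le_trans (le_of_lt hx2) ht₀S.1.2⟩, hc⟩
    exact absurd (csInf_le hSbdd hxS) (not_le.2 hx2)
  -- w is monotone on [τ, t₀]
  have hwmono : MonotoneOn w (Icc τ t₀) := by
    apply monotoneOn_of_deriv_nonneg (convex_Icc τ t₀)
    · exact hwc.mono (Icc_subset_Icc le_rfl ht₀S.1.2)
    · intro x hx
      rw [interior_Icc] at hx
      have hxpos : 0 < x := lt_trans hτ hx.1
      have hdx : HasDerivAt h (h' x) x :=
        (hhd x (le_of_lt hxpos)).hasDerivAt (Ici_mem_nhds hxpos)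
      exact (((hZd x).const_mul q).sub (hdx.mul (hνd x))).differentiableAt.differentiableWithinAt
    · intro x hx
      rw [interior_Icc] at hx
      have hxτ : τ ≤ x := le_of_lt hx.1
      have hxpos : 0 < x := lt_trans hτ hx.1
      have hdx : HasDerivAt h (h' x) x :=
        (hhd x (le_of_lt hxpos)).hasDerivAt (Ici_mem_nhds hxpos)
      have hdw : HasDerivAt w
          (q * (β x * nu γ x) - (h' x * nu γ x + h x * (-γ x * nu γ x))) x :=
        ((hZd x).const_mul q).sub (hdx.mul (hνd x))
      rw [hdw.deriv, hheq x (le_of_lt hxpos)]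
      -- key estimate
      have hhx : h x ≤ q * ζ x := by
        have h1 := hwpos x hxτ hx.2
        have h2 := hζν x hxτ
        simp only [hw] at h1
        have : h x * nu γ x < q * ζ x * nu γ x := by nlinarith
        exact le_of_lt ((mul_lt_mul_iff_left₀ (hνpos x)).1 this)
      have hζpos : 0 ≤ q * ζ x := le_trans (hh0 x (by linarith)) hhx
      have hσpos : 0 < sig γ τ x := Real.exp_pos _
      have hd1 : h (x - τ) ≤ sig γ τ x * (q * ζ x) := by
        have := hdelay x hxτ
        have h2 : h x * sig γ τ x ≤ q * ζ x * sig γ τ x :=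
          (mul_le_mul_iff_left₀ hσpos).2 hhx
        nlinarith
      have hd2 : h (x - τ) ^ p ≤ sig γ τ x ^ p * (q * ζ x) ^ p := by
        rw [← Real.mul_rpow (le_of_lt hσpos) hζpos]
        exact Real.rpow_le_rpow (hh0 _ (by linarith)) hd1 (by linarith)
      have hd3 : α x * h (x - τ) ^ p ≤ (q - 1) * β x := by
        calc α x * h (x - τ) ^ p ≤ α x * (sig γ τ x ^ p * (q * ζ x) ^ p) :=
              mul_le_mul_of_nonneg_left hd2 (hα x)
          _ = α x * sig γ τ x ^ p * (q * ζ x) ^ p := by ring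
          _ ≤ (q - 1) * β x := hcond x hxτ
      nlinarith [hνpos x, mul_le_mul_of_nonneg_right hd3 (le_of_lt (hνpos x))]
  -- contradiction
  have h1 : w τ ≤ w t₀ :=
    hwmono (left_mem_Icc.2 (le_of_lt hτlt)) (right_mem_Icc.2 (le_of_lt hτlt)) (le_of_lt hτlt)
  have h2 : w t₀ ≤ 0 := ht₀S.2
  linarith
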